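/- Let G = (V,E) be a finite connected simple graph, let v0 be a vertex, and let δ : V → ℕ be a function with Σ_{v∈V} δ(v) = |E|. Then δ is the outdegree function of some v0-connected orientation of G if and only if exc_δ(U) ≥ 0 for every subset U ⊆ V and exc_δ(U) > 0 for every proper subset U ⊊ V containing v0. -/

import Mathlib

/-- An orientation of a simple graph: a choice of direction for each edge. -/
structure GraphOrientation {V : Type*} (G : SimpleGraph V) where
  dir : V → V → Prop
  adj_of_dir : ∀ u v, dir u v → G.Adj u v
  dir_iff_not : ∀ u v, G.Adj u v → (dir u v ↔ ¬ dir v u)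

namespace GraphOrientation

variable {V : Type*} {G : SimpleGraph V}

/-- The outdegree of a vertex: the number of edges directed away from it. -/
noncomputable def outDegree (O : GraphOrientation G) (v : V) : ℕ :=
  {u | O.dir v u}.ncard

/-- `v` is reachable from `u` by a directed path. -/
def Reaches (O : GraphOrientation G) : V → V → Prop :=
  Relation.ReflTransGen O.dir

/-- `C` is the edge set of a directed cycle of the orientation. -/
def IsDirCycle (O : GraphOrientation G) (C : Set (Sym2 V)) : Prop :=
  ∃ (v : V) (w : G.Walk v v), w.IsCycle ∧
    (∀ d ∈ w.darts, O.dir d.toProd.1 d.toProd.2) ∧ C = {e | e ∈ w.edges}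

/-- The orientation is strongly connected. -/
def IsStronglyConnected (O : GraphOrientation G) : Prop := ∀ u v, O.Reaches u v

/-- Every vertex is reachable from `v0`. -/
def IsConnectedFrom (O : GraphOrientation G) (v0 : V) : Prop := ∀ v, O.Reaches v0 v

/-- The set of edges on which two orientations differ. -/
def diffSet (O O' : GraphOrientation G) : Set (Sym2 V) :=
  {e | ∃ a b, e = s(a, b) ∧ O.dir a b ∧ O'.dir b a}

/-- `O'` is obtained from `O` by reversing exactly the edges of `A`. -/
def IsFlipOn (O O' : GraphOrientation G) (A : Set (Sym2 V)) : Prop :=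
  (∀ u v, s(u, v) ∈ A → (O'.dir u v ↔ O.dir v u)) ∧
    (∀ u v, s(u, v) ∉ A → (O'.dir u v ↔ O.dir u v))

/-- One cycle-flip step. -/
def CycleFlip (O O' : GraphOrientation G) : Prop :=
  ∃ C, O.IsDirCycle C ∧ O.IsFlipOn O' C

end GraphOrientation

/-- The cut defined by a vertex subset `U`: edges with exactly one endpoint in `U`. -/
def SimpleGraph.cutSet {V : Type*} (G : SimpleGraph V) (U : Set V) : Set (Sym2 V) :=
  {e | ∃ a b, e = s(a, b) ∧ G.Adj a b ∧ a ∈ U ∧ b ∉ U}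

/-- A cocycle: a minimal nonempty cut. -/
def SimpleGraph.IsCocycle {V : Type*} (G : SimpleGraph V) (D : Set (Sym2 V)) : Prop :=
  D.Nonempty ∧ (∃ U : Set V, D = G.cutSet U) ∧
    ∀ D' : Set (Sym2 V), D'.Nonempty → (∃ U : Set V, D' = G.cutSet U) → D' ⊆ D → D' = D

/-- A directed cocycle: a cocycle all of whose edges are directed toward the same side. -/
def GraphOrientation.IsDirCocycle {V : Type*} {G : SimpleGraph V}
    (O : GraphOrientation G) (D : Set (Sym2 V)) : Prop :=
  G.IsCocycle D ∧ ∃ U : Set V, D = G.cutSet U ∧ ∀ a b, O.dir a b → s(a, b) ∈ D → b ∈ U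

/-- The excess of a subset of vertices with respect to `δ : V → ℕ`. -/
noncomputable def SimpleGraph.excess {V : Type*} (G : SimpleGraph V) (δ : V → ℕ)
    (U : Finset V) : ℤ :=
  (∑ u ∈ U, (δ u : ℤ)) - ({e | e ∈ G.edgeSet ∧ ∀ x ∈ e, x ∈ U} : Set (Sym2 V)).ncard

/-- `C` is the edge set of a cycle of `G`. -/
def SimpleGraph.IsCycleEdgeSet {V : Type*} (G : SimpleGraph V) (C : Set (Sym2 V)) : Prop :=
  ∃ (v : V) (w : G.Walk v v), w.IsCycle ∧ C = {e | e ∈ w.edges}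

/-- The number of connected components of the spanning subgraph `(V, S)`. -/
noncomputable def numComponents (V : Type*) (S : Set (Sym2 V)) : ℕ :=
  Nat.card (SimpleGraph.fromEdgeSet S).ConnectedComponent

lemma GraphOrientation.asymm' {V : Type*} {G : SimpleGraph V} (O : GraphOrientation G)
    {a b : V} (h : O.dir a b) : ¬ O.dir b a :=
  (O.dir_iff_not a b (O.adj_of_dir a b h)).mp h

lemma excess_outDegree {V : Type*} [Fintype V] {G : SimpleGraph V} (O : GraphOrientation G)
    (U : Finset V) :
    ∃ Crs : Finset (Sym2 V),
      G.excess O.outDegree U = Crs.card ∧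
      ∀ e, e ∈ Crs ↔ ∃ a b, e = s(a, b) ∧ O.dir a b ∧ a ∈ U ∧ b ∉ U := by
  classical
  set T : Finset (V × V) := Finset.univ.filter (fun p => p.1 ∈ U ∧ O.dir p.1 p.2) with hT
  set Ins : Finset (Sym2 V) :=
    Finset.univ.filter (fun e => e ∈ G.edgeSet ∧ ∀ x ∈ e, x ∈ U) with hIns
  set Crs : Finset (Sym2 V) :=
    Finset.univ.filter (fun e => ∃ a b, e = s(a, b) ∧ O.dir a b ∧ a ∈ U ∧ b ∉ U) with hCrs
  refine ⟨Crs, ?_, fun e => by simp [hCrs]⟩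
  have h1 : ∑ u ∈ U, O.outDegree u = T.card := by
    rw [Finset.card_eq_sum_card_fiberwise (f := Prod.fst) (s := T) (t := U)
      (fun p hp => (Finset.mem_filter.mp hp).2.1)]
    refine Finset.sum_congr rfl fun v hv => ?_
    rw [GraphOrientation.outDegree,
      show {u | O.dir v u} = ↑(Finset.univ.filter (fun u => O.dir v u)) from by ext; simp,
      Set.ncard_coe_finset]
    apply Finset.card_bij (fun u _ => (v, u))
    · intro u hu
      simp only [hT, Finset.mem_filter, Finset.mem_univ, true_and] at hu
      simp [hT, hv, hu]
    · intro u1 h1 u2 h2 h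
      exact (Prod.mk.injEq _ _ _ _ ▸ h).2
    · rintro ⟨a, b⟩ hp
      simp only [hT, Finset.mem_filter, Finset.mem_univ, true_and] at hp
      obtain ⟨⟨ha, hd⟩, rfl⟩ := hp
      exact ⟨b, by simpa using hd, rfl⟩
  have hinj : Set.InjOn (fun p : V × V => s(p.1, p.2)) T := by
    rintro ⟨a, b⟩ hp ⟨c, d⟩ hq h
    simp only [hT, Finset.coe_filter, Set.mem_setOf_eq, Finset.mem_univ, true_and] at hp hq
    simp only [Sym2.eq, Sym2.rel_iff', Prod.mk.injEq, Prod.swap_prod_mk] at h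
    rcases h with ⟨rfl, rfl⟩ | ⟨rfl, rfl⟩
    · rfl
    · exact absurd hq.2 (O.asymm' hp.2)
  have h2 : (T.image fun p => s(p.1, p.2)).card = T.card :=
    Finset.card_image_of_injOn hinj
  have h3 : T.image (fun p => s(p.1, p.2)) = Ins ∪ Crs := by
    ext e
    simp only [Finset.mem_image, Finset.mem_union, hIns, hCrs, Finset.mem_filter,
      Finset.mem_univ, true_and, hT]
    constructor
    · rintro ⟨⟨a, b⟩, hab, rfl⟩
      simp only [Finset.mem_filter, Finset.mem_univ, true_and] at hab
      obtain ⟨ha, hd⟩ := hab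
      by_cases hb : b ∈ U
      · exact Or.inl ⟨G.mem_edgeSet.mpr (O.adj_of_dir a b hd),
          fun x hx => by rcases Sym2.mem_iff.mp hx with rfl | rfl <;> assumption⟩
      · exact Or.inr ⟨a, b, rfl, hd, ha, hb⟩
    · rintro (⟨he, hall⟩ | ⟨a, b, rfl, hd, ha, hb⟩)
      · obtain ⟨x, y, rfl⟩ : ∃ x y, e = s(x, y) := by
          induction e using Sym2.ind with
          | _ x y => exact ⟨x, y, rfl⟩
        have hadj : G.Adj x y := G.mem_edgeSet.mp he
        by_cases hd : O.dir x y
        · exact ⟨(x, y), by simp [hall x (by simp), hd], rfl⟩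
        · have hd' : O.dir y x := by
            by_contra hc
            exact hd ((O.dir_iff_not x y hadj).mpr hc)
          exact ⟨(y, x), by simp [hall y (by simp), hd'], Sym2.eq_swap⟩
      · exact ⟨(a, b), by simp [ha, hd], rfl⟩
  have hdisj : Disjoint Ins Crs := by
    rw [Finset.disjoint_left]
    rintro e he hc
    simp only [hIns, Finset.mem_filter, Finset.mem_univ, true_and] at he
    simp only [hCrs, Finset.mem_filter, Finset.mem_univ, true_and] at hc
    obtain ⟨a, b, rfl, hd, ha, hb⟩ := hc
    exact hb (he.2 b (by simp))
  have h4 : T.card = Ins.card + Crs.card := by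
    rw [← h2, h3, Finset.card_union_of_disjoint hdisj]
  have h5 : ({e | e ∈ G.edgeSet ∧ ∀ x ∈ e, x ∈ U} : Set (Sym2 V)).ncard = Ins.card := by
    rw [show ({e | e ∈ G.edgeSet ∧ ∀ x ∈ e, x ∈ U} : Set (Sym2 V)) = ↑Ins from by
      ext e; simp [hIns], Set.ncard_coe_finset]
  rw [SimpleGraph.excess, h5]
  have hz : (∑ u ∈ U, (O.outDegree u : ℤ)) = (Ins.card : ℤ) + Crs.card := by
    exact_mod_cast congrArg (Nat.cast : ℕ → ℤ) (h1.trans h4)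
  rw [hz]
  ring

lemma cross_of_reaches {V : Type*} {G : SimpleGraph V} (O : GraphOrientation G) (U : Set V)
    {x y : V} (h : O.Reaches x y) (hx : x ∈ U) (hy : y ∉ U) :
    ∃ a ∈ U, ∃ b, b ∉ U ∧ O.dir a b := by
  have h' : Relation.ReflTransGen O.dir x y := h
  clear h
  induction h' with
  | refl => exact absurd hx hy
  | @tail b c hxb hbc ih =>
    by_cases hb : b ∈ U
    · exact ⟨b, hb, c, hy, hbc⟩
    · exact ih hb

lemma connectedFrom_of {V : Type*} [Fintype V] {G : SimpleGraph V} (O : GraphOrientation G)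
    (v0 : V)
    (h : ∀ U : Finset V, U ≠ Finset.univ → v0 ∈ U → ∃ a ∈ U, ∃ b, b ∉ U ∧ O.dir a b) :
    O.IsConnectedFrom v0 := by
  classical
  set R : Finset V := Finset.univ.filter (fun v => O.Reaches v0 v) with hR
  have hv0 : v0 ∈ R := by
    simp only [hR, Finset.mem_filter, Finset.mem_univ, true_and]
    exact Relation.ReflTransGen.refl
  have hRu : R = Finset.univ := by
    by_contra hne
    obtain ⟨a, ha, b, hb, hd⟩ := h R hne hv0
    simp only [hR, Finset.mem_filter, Finset.mem_univ, true_and] at ha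
    refine hb ?_
    simp only [hR, Finset.mem_filter, Finset.mem_univ, true_and]
    exact Relation.ReflTransGen.tail ha hd
  intro v
  have hv : v ∈ R := hRu ▸ Finset.mem_univ v
  simpa only [hR, Finset.mem_filter, Finset.mem_univ, true_and] using hv

lemma exists_orient {V : Type*} [Fintype V] (G : SimpleGraph V) (δ : V → ℕ)
    (hsum : ∑ v, δ v = G.edgeSet.ncard)
    (hexc : ∀ U : Finset V, 0 ≤ G.excess δ U) :
    ∃ O : GraphOrientation G, O.outDegree = δ := by
  classical
  set ι := {e : Sym2 V // e ∈ G.edgeFinset} with hι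
  set t : ι → Finset (Σ v : V, Fin (δ v)) :=
    fun e => Finset.univ.filter (fun s => s.1 ∈ e.1) with ht
  have hall : ∀ s : Finset ι, s.card ≤ (s.biUnion t).card := by
    intro s
    set U : Finset V := Finset.univ.filter (fun v => ∃ e ∈ s, v ∈ e.1) with hU
    have h1 : s.biUnion t = Finset.univ.filter (fun x : (Σ v : V, Fin (δ v)) => x.1 ∈ U) := by
      ext x
      simp [ht, hU, Finset.mem_biUnion]
    have h2 : (Finset.univ.filter (fun x : (Σ v : V, Fin (δ v)) => x.1 ∈ U)).card
        = ∑ v ∈ U, δ v := by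
      rw [show Finset.univ.filter (fun x : (Σ v : V, Fin (δ v)) => x.1 ∈ U)
          = U.sigma (fun v => (Finset.univ : Finset (Fin (δ v)))) from by
        ext x; simp [Finset.mem_sigma]]
      rw [Finset.card_sigma]
      simp
    set Ins : Finset (Sym2 V) :=
      Finset.univ.filter (fun e => e ∈ G.edgeSet ∧ ∀ x ∈ e, x ∈ U) with hIns
    have h3 : s.card ≤ Ins.card := by
      apply Finset.card_le_card_of_injOn (fun e => e.1)
      · intro e he
        simp only [hIns, Finset.mem_coe, Finset.mem_filter, Finset.mem_univ, true_and]
        refine ⟨SimpleGraph.mem_edgeFinset.mp e.2, fun x hx => ?_⟩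
        simp only [hU, Finset.mem_filter, Finset.mem_univ, true_and]
        exact ⟨e, he, hx⟩
      · exact fun a _ b _ h => Subtype.ext h
    have h5 : ({e | e ∈ G.edgeSet ∧ ∀ x ∈ e, x ∈ U} : Set (Sym2 V)).ncard = Ins.card := by
      rw [show ({e | e ∈ G.edgeSet ∧ ∀ x ∈ e, x ∈ U} : Set (Sym2 V)) = ↑Ins from by
        ext e; simp [hIns], Set.ncard_coe_finset]
    have h4 := hexc U
    rw [SimpleGraph.excess, h5] at h4
    have h6 : (Ins.card : ℤ) ≤ ∑ v ∈ U, (δ v : ℤ) := by linarith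
    have h7 : Ins.card ≤ ∑ v ∈ U, δ v := by exact_mod_cast h6
    rw [h1, h2]
    exact h3.trans h7
  obtain ⟨f, hfi, hft⟩ := (Finset.all_card_le_biUnion_card_iff_exists_injective t).mp hall
  have hfe : ∀ e : ι, (f e).1 ∈ e.1 := by
    intro e
    have := hft e
    simpa [ht] using this
  have hmemE : ∀ {a b : V}, G.Adj a b → s(a, b) ∈ G.edgeFinset := by
    intro a b h
    simp [SimpleGraph.mem_edgeFinset, h]
  set dir : V → V → Prop :=
    fun a b => ∃ h : G.Adj a b, (f ⟨s(a, b), hmemE h⟩).1 = a with hdir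
  have hadj_of : ∀ u v, dir u v → G.Adj u v := fun u v h => h.elim fun hp _ => hp
  have hdiriff : ∀ u v, G.Adj u v → (dir u v ↔ ¬ dir v u) := by
    intro u v huv
    have hin := hfe ⟨s(u, v), hmemE huv⟩
    rw [Sym2.mem_iff] at hin
    have hswap : (⟨s(v, u), hmemE huv.symm⟩ : ι) = ⟨s(u, v), hmemE huv⟩ :=
      Subtype.ext (Sym2.eq_swap)
    have h1 : dir u v ↔ (f ⟨s(u, v), hmemE huv⟩).1 = u := by
      rw [hdir]
      constructor
      · rintro ⟨h', hh⟩; exact hh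
      · intro hh; exact ⟨huv, hh⟩
    have h2 : dir v u ↔ (f ⟨s(u, v), hmemE huv⟩).1 = v := by
      rw [hdir]
      constructor
      · rintro ⟨h', hh⟩; rw [← hswap]; exact hh
      · intro hh; exact ⟨huv.symm, by rw [hswap]; exact hh⟩
    rw [h1, h2]
    have hne : u ≠ v := huv.ne
    constructor
    · intro h hc
      exact hne (h.symm.trans hc)
    · intro h
      rcases hin with h' | h'
      · exact h'
      · exact absurd h' h
  have hle : ∀ v, (Finset.univ.filter (fun e : ι => (f e).1 = v)).card ≤ δ v := by
    intro v
    have himg : (Finset.univ.filter (fun e : ι => (f e).1 = v)).image f ⊆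
        Finset.univ.filter (fun x : (Σ v : V, Fin (δ v)) => x.1 = v) := by
      intro x hx
      simp only [Finset.mem_image, Finset.mem_filter, Finset.mem_univ, true_and] at hx ⊢
      obtain ⟨e, he, rfl⟩ := hx
      exact he
    have hc1 := Finset.card_image_of_injective
      (Finset.univ.filter (fun e : ι => (f e).1 = v)) hfi
    have hc2 : (Finset.univ.filter (fun x : (Σ v : V, Fin (δ v)) => x.1 = v)).card = δ v := by
      rw [show Finset.univ.filter (fun x : (Σ v : V, Fin (δ v)) => x.1 = v)
          = ({v} : Finset V).sigma (fun v => (Finset.univ : Finset (Fin (δ v)))) from by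
        ext x; simp [Finset.mem_sigma]]
      rw [Finset.card_sigma]
      simp
    rw [← hc2, ← hc1]
    exact Finset.card_le_card himg
  have hsum2 : ∑ v, (Finset.univ.filter (fun e : ι => (f e).1 = v)).card = ∑ v, δ v := by
    rw [hsum]
    rw [← Finset.card_eq_sum_card_fiberwise (f := fun e : ι => (f e).1)
      (s := Finset.univ) (t := Finset.univ) (fun _ _ => Finset.mem_univ _)]
    rw [Finset.card_univ]
    rw [show G.edgeSet.ncard = G.edgeFinset.card from by
      rw [← SimpleGraph.coe_edgeFinset, Set.ncard_coe_finset]]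
    exact Fintype.card_coe _
  have hcard : ∀ v, (Finset.univ.filter (fun e : ι => (f e).1 = v)).card = δ v := by
    intro v
    exact (Finset.sum_eq_sum_iff_of_le (fun i _ => hle i)).mp hsum2 v (Finset.mem_univ v)
  refine ⟨⟨dir, hadj_of, hdiriff⟩, ?_⟩
  funext v
  show ({u | dir v u}).ncard = δ v
  rw [show {u | dir v u} = ↑(Finset.univ.filter (fun u => dir v u)) from by ext; simp,
    Set.ncard_coe_finset, ← hcard v]
  apply Finset.card_bij
    (fun u hu => (⟨s(v, u), hmemE (hadj_of v u ((Finset.mem_filter.mp hu).2))⟩ : ι))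
  · intro u hu
    simp only [Finset.mem_filter, Finset.mem_univ, true_and] at hu ⊢
    rw [hdir] at hu
    obtain ⟨hadj, heq⟩ := hu
    exact heq
  · intro u1 h1 u2 h2 hsub
    have hvv : s(v, u1) = s(v, u2) := congrArg Subtype.val hsub
    simp only [Sym2.eq, Sym2.rel_iff', Prod.mk.injEq, Prod.swap_prod_mk] at hvv
    rcases hvv with ⟨-, h⟩ | ⟨h', h⟩
    · exact h
    · exfalso
      simp only [Finset.mem_filter, Finset.mem_univ, true_and] at h1
      exact (hadj_of _ _ h1).ne (h.symm ▸ rfl)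
  · intro e he
    simp only [Finset.mem_filter, Finset.mem_univ, true_and] at he
    have hv : v ∈ e.1 := he ▸ hfe e
    obtain ⟨u, hu⟩ := Sym2.mem_iff_exists.mp hv
    have hadj : G.Adj v u := G.mem_edgeSet.mp (by
      rw [← hu]; exact SimpleGraph.mem_edgeFinset.mp e.2)
    have heq : (⟨s(v, u), hmemE hadj⟩ : ι) = e := Subtype.ext hu.symm
    refine ⟨u, ?_, heq⟩
    simp only [Finset.mem_filter, Finset.mem_univ, true_and]
    rw [hdir]
    exact ⟨hadj, by rw [heq]; exact he⟩


theorem statement3 {V : Type*} [Fintype V] (G : SimpleGraph V) (hG : G.Connected)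
    (v0 : V) (δ : V → ℕ) (hsum : ∑ v, δ v = G.edgeSet.ncard) :
    (∃ O : GraphOrientation G, O.IsConnectedFrom v0 ∧ O.outDegree = δ) ↔
      ((∀ U : Finset V, 0 ≤ G.excess δ U) ∧
        ∀ U : Finset V, U ≠ Finset.univ → v0 ∈ U → 0 < G.excess δ U) := by
  classical
  constructor
  · rintro ⟨O, hO, rfl⟩
    constructor
    · intro U
      obtain ⟨C, hC, hmem⟩ := excess_outDegree O U
      rw [hC]
      exact_mod_cast Nat.zero_le _
    · intro U hU hv0
      obtain ⟨C, hC, hmem⟩ := excess_outDegree O U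
      rw [hC]
      obtain ⟨w, hw⟩ : ∃ w, w ∉ U := by
        by_contra hcon
        push_neg at hcon
        exact hU (Finset.eq_univ_iff_forall.mpr hcon)
      obtain ⟨a, ha, b, hb, hd⟩ := cross_of_reaches O (↑U : Set V) (hO w)
        (Finset.mem_coe.mpr hv0) (fun hc => hw (Finset.mem_coe.mp hc))
      have hCe : s(a, b) ∈ C := (hmem _).mpr ⟨a, b, rfl, hd, ha, hb⟩
      exact_mod_cast Finset.card_pos.mpr ⟨_, hCe⟩
  · rintro ⟨h0, h1⟩
    obtain ⟨O, hO⟩ := exists_orient G δ hsum h0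
    refine ⟨O, ?_, hO⟩
    apply connectedFrom_of
    intro U hU hv0
    have hpos := h1 U hU hv0
    rw [← hO] at hpos
    obtain ⟨C, hC, hmem⟩ := excess_outDegree O U
    rw [hC] at hpos
    have hCne : C.Nonempty := Finset.card_pos.mp (by exact_mod_cast hpos)
    obtain ⟨e, he⟩ := hCne
    obtain ⟨a, b, rfl, hd, ha, hb⟩ := (hmem e).mp he
    exact ⟨a, ha, b, hb, hd⟩
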